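/- Let s* ∈ ℤ with 2 ≤ s* ≤ N − 1 and Δ ∈ ℝ. If 0 < Δ ≤ min{ B₋(s*), B₊(s*) }, then there exists a minimizer s′ of the function s ↦ v_U(s; δ+Δ, φ) over {1, …, N} with s′ < s*. -/

import Mathlib

open Finset

/-- `v_U(s; δ, φ) = κσ²(1 − ρ + ρs + δ)/s − (Σ_{i=1}^s r̄_[i])/s + φs`. -/
noncomputable def vU (κ σ ρ δ φ : ℝ) (r : ℕ → ℝ) (s : ℕ) : ℝ :=
  κ * σ ^ 2 * (1 - ρ + ρ * s + δ) / s - (∑ i ∈ Finset.Icc 1 s, r i) / s + φ * s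

/-- `B₋(s*) = ρ − δ − 1 − (1/(κσ²)) min_{1 ≤ l < s*}
  ((l Σ_{i≤s*} r̄_[i] − s* Σ_{i≤l} r̄_[i])/(s* − l) − φ s* l)`. -/
noncomputable def Bminus (κ σ ρ δ φ : ℝ) (r : ℕ → ℝ) (sstar : ℕ) : ℝ :=
  ρ - δ - 1 - (1 / (κ * σ ^ 2)) *
    sInf {y : ℝ | ∃ l : ℕ, 1 ≤ l ∧ l < sstar ∧
      y = ((l : ℝ) * (∑ i ∈ Finset.Icc 1 sstar, r i)
            - (sstar : ℝ) * (∑ i ∈ Finset.Icc 1 l, r i)) / ((sstar : ℝ) - (l : ℝ))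
          - φ * (sstar : ℝ) * (l : ℝ)}

/-- `B₊(s*) = ρ − δ − 1 + (1/(κσ²)) min_{s* < l ≤ N}
  ((l Σ_{i≤s*} r̄_[i] − s* Σ_{i≤l} r̄_[i])/(l − s*) + φ s* l)`. -/
noncomputable def Bplus (N : ℕ) (κ σ ρ δ φ : ℝ) (r : ℕ → ℝ) (sstar : ℕ) : ℝ :=
  ρ - δ - 1 + (1 / (κ * σ ^ 2)) *
    sInf {y : ℝ | ∃ l : ℕ, sstar < l ∧ l ≤ N ∧
      y = ((l : ℝ) * (∑ i ∈ Finset.Icc 1 sstar, r i)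
            - (sstar : ℝ) * (∑ i ∈ Finset.Icc 1 l, r i)) / ((l : ℝ) - (sstar : ℝ))
          + φ * (sstar : ℝ) * (l : ℝ)}

private lemma key_ineq (a φ SL SS L S : ℝ) (hL : 0 < L) (hLS : L < S)
    (h : a ≤ (S*SL - L*SS)/(S-L) + φ*S*L) :
    a/L - SL/L + φ*L ≤ a/S - SS/S + φ*S := by
  have hS : 0 < S := lt_trans hL hLS
  have hd : 0 < S - L := by linarith
  have h2 : (a - φ*S*L) * (S - L) ≤ S*SL - L*SS := by
    have := (le_div_iff₀ hd).mp (by linarith : a - φ*S*L ≤ (S*SL - L*SS)/(S-L))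
    linarith
  have e : a/L - SL/L + φ*L - (a/S - SS/S + φ*S)
      = ((a - φ*S*L)*(S-L) - (S*SL - L*SS))/(L*S) := by
    field_simp
    ring
  have hle : a/L - SL/L + φ*L - (a/S - SS/S + φ*S) ≤ 0 := by
    rw [e]
    exact div_nonpos_of_nonpos_of_nonneg (by linarith) (by positivity)
  linarith

private lemma vU_eq (κ σ ρ δ' φ : ℝ) (r : ℕ → ℝ) (s : ℕ) (hs : 1 ≤ s) :
    vU κ σ ρ δ' φ r s = κ*σ^2*ρ + (κ*σ^2*(1-ρ+δ'))/(s:ℝ)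
      - (∑ i ∈ Finset.Icc 1 s, r i)/(s:ℝ) + φ*(s:ℝ) := by
  have hs0 : (s:ℝ) ≠ 0 := Nat.cast_ne_zero.mpr (by omega)
  unfold vU
  field_simp
  ring

private lemma vU_le (κ σ ρ δ' φ : ℝ) (r : ℕ → ℝ) (l s : ℕ) (hl : 1 ≤ l) (hls : l < s)
    (h : κ*σ^2*(1-ρ+δ') ≤ ((s:ℝ)*(∑ i ∈ Finset.Icc 1 l, r i)
        - (l:ℝ)*(∑ i ∈ Finset.Icc 1 s, r i))/((s:ℝ)-(l:ℝ)) + φ*(s:ℝ)*(l:ℝ)) :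
    vU κ σ ρ δ' φ r l ≤ vU κ σ ρ δ' φ r s := by
  have hL : (0:ℝ) < l := by exact_mod_cast Nat.pos_of_ne_zero (by omega)
  have hLS : (l:ℝ) < (s:ℝ) := by exact_mod_cast hls
  rw [vU_eq κ σ ρ δ' φ r l hl, vU_eq κ σ ρ δ' φ r s (by omega)]
  have := key_ineq (κ*σ^2*(1-ρ+δ')) φ (∑ i ∈ Finset.Icc 1 l, r i)
    (∑ i ∈ Finset.Icc 1 s, r i) (l:ℝ) (s:ℝ) hL hLS h
  linarith

/-- Proposition 4, condition C1: if `0 < Δ ≤ min{B₋(s*), B₊(s*)}`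
then there is a minimizer `s′` of `s ↦ v_U(s; δ+Δ, φ)` over `{1,…,N}` with `s′ < s*`. -/
theorem stmt10 (N : ℕ) (hN : 3 ≤ N) (κ σ ρ δ φ : ℝ)
    (hκ : 0 < κ) (hσ : 0 < σ) (hρ1 : -1 < ρ) (hρ2 : ρ < 1) (hδ : 0 ≤ δ) (hφ : 0 < φ)
    (r : ℕ → ℝ) (hr : ∀ i j : ℕ, 1 ≤ i → i ≤ j → j ≤ N → r j ≤ r i)
    (sstar : ℕ) (hs1 : 2 ≤ sstar) (hs2 : sstar ≤ N - 1)
    (Δ : ℝ) (hΔpos : 0 < Δ)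
    (hΔle : Δ ≤ min (Bminus κ σ ρ δ φ r sstar) (Bplus N κ σ ρ δ φ r sstar)) :
    ∃ s' : ℕ, 1 ≤ s' ∧ s' ≤ N ∧ s' < sstar ∧
      ∀ s : ℕ, 1 ≤ s → s ≤ N →
        vU κ σ ρ (δ + Δ) φ r s' ≤ vU κ σ ρ (δ + Δ) φ r s := by
  have hc : (0:ℝ) < κ * σ ^ 2 := by positivity
  have hsN : sstar < N := by omega
  set c := κ * σ ^ 2 with hcdef
  -- shorthand for the minus-set
  set Sm : Set ℝ := {y : ℝ | ∃ l : ℕ, 1 ≤ l ∧ l < sstar ∧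
      y = ((l : ℝ) * (∑ i ∈ Finset.Icc 1 sstar, r i)
            - (sstar : ℝ) * (∑ i ∈ Finset.Icc 1 l, r i)) / ((sstar : ℝ) - (l : ℝ))
          - φ * (sstar : ℝ) * (l : ℝ)} with hSmdef
  set Sp : Set ℝ := {y : ℝ | ∃ l : ℕ, sstar < l ∧ l ≤ N ∧
      y = ((l : ℝ) * (∑ i ∈ Finset.Icc 1 sstar, r i)
            - (sstar : ℝ) * (∑ i ∈ Finset.Icc 1 l, r i)) / ((l : ℝ) - (sstar : ℝ))
          + φ * (sstar : ℝ) * (l : ℝ)} with hSpdef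
  have hBm : Δ ≤ ρ - δ - 1 - (1 / c) * sInf Sm := le_trans hΔle (min_le_left _ _)
  have hBp : Δ ≤ ρ - δ - 1 + (1 / c) * sInf Sp := le_trans hΔle (min_le_right _ _)
  -- finiteness of the sets
  have hfm : ∀ (f : ℕ → ℝ) (P : ℕ → Prop) (a b : ℕ),
      (∀ l, P l ↔ a ≤ l ∧ l < b) →
      ({y : ℝ | ∃ l : ℕ, P l ∧ y = f l}).Finite := by
    intro f P a b hP
    have : {y : ℝ | ∃ l : ℕ, P l ∧ y = f l} ⊆ f '' ((Finset.Ico a b : Finset ℕ) : Set ℕ) := by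
      rintro y ⟨l, hPl, rfl⟩
      exact ⟨l, by simpa [Finset.mem_Ico] using (hP l).mp hPl, rfl⟩
    exact Set.Finite.subset ((Finset.finite_toSet _).image f) this
  have hSmfin : Sm.Finite := by
    refine hfm (fun l => ((l : ℝ) * (∑ i ∈ Finset.Icc 1 sstar, r i)
            - (sstar : ℝ) * (∑ i ∈ Finset.Icc 1 l, r i)) / ((sstar : ℝ) - (l : ℝ))
          - φ * (sstar : ℝ) * (l : ℝ)) (fun l => 1 ≤ l ∧ l < sstar) 1 sstar (fun l => Iff.rfl)
      |>.subset ?_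
    rintro y ⟨l, h1, h2, rfl⟩
    exact ⟨l, ⟨h1, h2⟩, rfl⟩
  have hSpfin : Sp.Finite := by
    refine hfm (fun l => ((l : ℝ) * (∑ i ∈ Finset.Icc 1 sstar, r i)
            - (sstar : ℝ) * (∑ i ∈ Finset.Icc 1 l, r i)) / ((l : ℝ) - (sstar : ℝ))
          + φ * (sstar : ℝ) * (l : ℝ)) (fun l => sstar < l ∧ l ≤ N) (sstar + 1) (N + 1)
      (fun l => by omega) |>.subset ?_
    rintro y ⟨l, h1, h2, rfl⟩
    exact ⟨l, ⟨h1, h2⟩, rfl⟩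
  have hSmne : Sm.Nonempty := ⟨_, 1, le_refl 1, by omega, rfl⟩
  -- the infimum of Sm is attained at some l₀
  obtain ⟨l₀, hl₀1, hl₀2, hfl₀⟩ : ∃ l : ℕ, 1 ≤ l ∧ l < sstar ∧
      sInf Sm = ((l : ℝ) * (∑ i ∈ Finset.Icc 1 sstar, r i)
            - (sstar : ℝ) * (∑ i ∈ Finset.Icc 1 l, r i)) / ((sstar : ℝ) - (l : ℝ))
          - φ * (sstar : ℝ) * (l : ℝ) := hSmne.csInf_mem hSmfin
  -- key inequality from B₋ : vU l₀ ≤ vU sstar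
  have hcast : (l₀:ℝ) < (sstar:ℝ) := by exact_mod_cast hl₀2
  have hkeym : κ*σ^2*(1-ρ+(δ+Δ)) ≤ ((sstar:ℝ)*(∑ i ∈ Finset.Icc 1 l₀, r i)
      - (l₀:ℝ)*(∑ i ∈ Finset.Icc 1 sstar, r i))/((sstar:ℝ)-(l₀:ℝ)) + φ*(sstar:ℝ)*(l₀:ℝ) := by
    rw [hfl₀] at hBm
    have h0 : (1/c) * (((l₀ : ℝ) * (∑ i ∈ Finset.Icc 1 sstar, r i)
            - (sstar : ℝ) * (∑ i ∈ Finset.Icc 1 l₀, r i)) / ((sstar : ℝ) - (l₀ : ℝ))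
          - φ * (sstar : ℝ) * (l₀ : ℝ)) ≤ ρ - δ - 1 - Δ := by linarith
    have h1 : ((l₀ : ℝ) * (∑ i ∈ Finset.Icc 1 sstar, r i)
            - (sstar : ℝ) * (∑ i ∈ Finset.Icc 1 l₀, r i)) / ((sstar : ℝ) - (l₀ : ℝ))
          - φ * (sstar : ℝ) * (l₀ : ℝ) ≤ c * (ρ - δ - 1 - Δ) := by
      have := mul_le_mul_of_nonneg_left h0 hc.le
      rw [mul_comm (1/c)] at this
      rw [← mul_assoc] at this
      field_simp at this
      linarith [this]
    have hneg : ((sstar:ℝ)*(∑ i ∈ Finset.Icc 1 l₀, r i)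
        - (l₀:ℝ)*(∑ i ∈ Finset.Icc 1 sstar, r i))/((sstar:ℝ)-(l₀:ℝ))
        = -(((l₀ : ℝ) * (∑ i ∈ Finset.Icc 1 sstar, r i)
            - (sstar : ℝ) * (∑ i ∈ Finset.Icc 1 l₀, r i)) / ((sstar : ℝ) - (l₀ : ℝ))) := by
      rw [← neg_div]; ring_nf
    rw [hneg, ← hcdef]
    linarith
  have hvml : vU κ σ ρ (δ + Δ) φ r l₀ ≤ vU κ σ ρ (δ + Δ) φ r sstar :=
    vU_le κ σ ρ (δ+Δ) φ r l₀ sstar hl₀1 hl₀2 hkeym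
  -- key inequality from B₊ : vU sstar ≤ vU s for sstar < s ≤ N
  have hvps : ∀ s : ℕ, sstar < s → s ≤ N →
      vU κ σ ρ (δ + Δ) φ r sstar ≤ vU κ σ ρ (δ + Δ) φ r s := by
    intro s hss hsle
    have hmem : ((s : ℝ) * (∑ i ∈ Finset.Icc 1 sstar, r i)
            - (sstar : ℝ) * (∑ i ∈ Finset.Icc 1 s, r i)) / ((s : ℝ) - (sstar : ℝ))
          + φ * (sstar : ℝ) * (s : ℝ) ∈ Sp := ⟨s, hss, hsle, rfl⟩
    have hinf := csInf_le hSpfin.bddBelow hmem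
    apply vU_le κ σ ρ (δ+Δ) φ r sstar s (by omega) hss
    have h0 : Δ ≤ ρ - δ - 1 + (1/c) * (((s : ℝ) * (∑ i ∈ Finset.Icc 1 sstar, r i)
            - (sstar : ℝ) * (∑ i ∈ Finset.Icc 1 s, r i)) / ((s : ℝ) - (sstar : ℝ))
          + φ * (sstar : ℝ) * (s : ℝ)) := by
      have := mul_le_mul_of_nonneg_left hinf (by positivity : (0:ℝ) ≤ 1/c)
      linarith
    have h1 : c * (Δ - ρ + δ + 1) ≤ ((s : ℝ) * (∑ i ∈ Finset.Icc 1 sstar, r i)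
            - (sstar : ℝ) * (∑ i ∈ Finset.Icc 1 s, r i)) / ((s : ℝ) - (sstar : ℝ))
          + φ * (sstar : ℝ) * (s : ℝ) := by
      have h2 : Δ - ρ + δ + 1 ≤ (1/c) * (((s : ℝ) * (∑ i ∈ Finset.Icc 1 sstar, r i)
            - (sstar : ℝ) * (∑ i ∈ Finset.Icc 1 s, r i)) / ((s : ℝ) - (sstar : ℝ))
          + φ * (sstar : ℝ) * (s : ℝ)) := by linarith
      have := mul_le_mul_of_nonneg_left h2 hc.le
      rw [mul_comm (1/c)] at this
      rw [← mul_assoc] at this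
      field_simp at this
      linarith [this]
    have hswap : φ*(s:ℝ)*(sstar:ℝ) = φ * (sstar : ℝ) * (s : ℝ) := by ring
    rw [hswap]
    calc κ*σ^2*(1-ρ+(δ+Δ)) = c * (Δ - ρ + δ + 1) := by rw [hcdef]; ring
    _ ≤ _ := h1
  -- choose s' minimizing vU over {1,…,sstar−1}
  obtain ⟨s', hs'mem, hs'min⟩ := Finset.exists_min_image (Finset.Ico 1 sstar)
    (vU κ σ ρ (δ + Δ) φ r) ⟨1, by simp [Finset.mem_Ico]; omega⟩
  rw [Finset.mem_Ico] at hs'mem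
  refine ⟨s', hs'mem.1, by omega, hs'mem.2, ?_⟩
  intro s hsl hsr
  rcases lt_trichotomy s sstar with h | h | h
  · exact hs'min s (Finset.mem_Ico.mpr ⟨hsl, h⟩)
  · subst h
    exact le_trans (hs'min l₀ (Finset.mem_Ico.mpr ⟨hl₀1, hl₀2⟩)) hvml
  · exact le_trans (hs'min l₀ (Finset.mem_Ico.mpr ⟨hl₀1, hl₀2⟩))
      (le_trans hvml (hvps s h hsr))
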